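/- arXiv:1003.5149 — 2 statements merged into one kernel-verified Lean document; each statement's English description precedes it below -/
import Mathlib

section
/- Let K be an algebraically closed field of characteristic 0, L/K a field extension, l ≥ 2 an integer, and a₁,…,aₙ ∈ L nonzero. If the Galois group Gal(K(l-th roots of a₁,…,aₙ)/K(a₁,…,aₙ)) is isomorphic to (ℤ/lℤ)ⁿ, then the tuple (a₁,…,aₙ) is multiplicatively independent over K^× (i.e. the only integers m₁,…,mₙ with a₁^{m₁}⋯aₙ^{mₙ} ∈ K^× are m₁=⋯=mₙ=0). -/
open IntermediateField

private lemma aux_coe_zpow {E L : Type*} [Field E] [Field L] [Algebra E L]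
    (F : IntermediateField E L) (x : F) (m : ℤ) : ((x ^ m : F) : L) = (x : L) ^ m :=
  map_zpow₀ (F.val) x m

private lemma aux_equiv_zpow {E F' : Type*} [Field E] [Field F'] [Algebra E F']
    (σ : F' ≃ₐ[E] F') (x : F') (m : ℤ) : σ (x ^ m) = σ x ^ m :=
  map_zpow₀ σ x m

set_option maxHeartbeats 1000000

/-- Let `K` be algebraically closed of characteristic `0`, `L/K` a
field extension, `l ≥ 2`, and `a₁,…,aₙ ∈ L` nonzero with chosen `l`-th roots
`α₁,…,αₙ`.  If `Gal(K(α₁,…,αₙ)/K(a₁,…,aₙ)) ≅ (ℤ/lℤ)ⁿ`, then `(a₁,…,aₙ)` is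
multiplicatively independent over `K^×`. -/
theorem stmt0 {K L : Type*} [Field K] [Field L] [Algebra K L]
    [IsAlgClosed K] [CharZero K] (n l : ℕ) (hl : 2 ≤ l)
    (a α : Fin n → L) (ha : ∀ i, a i ≠ 0) (hα : ∀ i, α i ^ l = a i)
    (E : IntermediateField K L) (hE : E = adjoin K (Set.range a))
    (F : IntermediateField E L) (hF : F = adjoin E (Set.range α))
    (hGal : Nonempty ((↥F ≃ₐ[↥E] ↥F) ≃* (Fin n → ZMod l))) :
    ∀ m : Fin n → ℤ, (∏ i, a i ^ m i) ∈ (algebraMap K L).range → ∀ i, m i = 0 := by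
  have hl0 : l ≠ 0 := by omega
  haveI : NeZero l := ⟨hl0⟩
  haveI : NeZero (l : K) := ⟨Nat.cast_ne_zero.mpr hl0⟩
  obtain ⟨ζ, hζ⟩ := HasEnoughRootsOfUnity.exists_primitiveRoot K l
  set f := algebraMap K L with hfdef
  have hfinj : Function.Injective f := (algebraMap K L).injective
  have hζL : IsPrimitiveRoot (f ζ) l := hζ.map_of_injective hfinj
  have hα0 : ∀ i, α i ≠ 0 := fun i hzero => ha i (by rw [← hα i, hzero, zero_pow hl0])
  have haE : ∀ i, a i ∈ E := fun i => hE ▸ subset_adjoin K _ ⟨i, rfl⟩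
  have hαF : ∀ i, α i ∈ F := fun i => hF ▸ subset_adjoin E _ ⟨i, rfl⟩
  set α' : Fin n → F := fun i => ⟨α i, hαF i⟩ with hα'def
  have hα'pow : ∀ i, α' i ^ l = algebraMap E F ⟨a i, haE i⟩ := by
    intro i
    apply Subtype.ext
    push_cast
    rw [hα i]
    rfl
  -- `F` is generated as an `E`-algebra by the `α' i`
  have hFalg : F.toSubalgebra = Algebra.adjoin (↥E) (Set.range α) := by
    rw [hF]
    apply adjoin_toSubalgebra_of_isAlgebraic
    rintro x ⟨i, rfl⟩
    have hint : IsIntegral (↥E) (α i) := by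
      apply IsIntegral.of_pow (by omega : 0 < l)
      rw [hα i]
      have : a i = algebraMap (↥E) L ⟨a i, haE i⟩ := rfl
      rw [this]
      exact isIntegral_algebraMap
    exact hint.isAlgebraic
  have hadj : Algebra.adjoin (↥E) (Set.range α') = (⊤ : Subalgebra (↥E) (↥F)) := by
    apply Subalgebra.map_injective (f := F.val) Subtype.val_injective
    rw [AlgHom.map_adjoin, Algebra.map_top, F.range_val, hFalg]
    congr 1
    ext x
    constructor
    · rintro ⟨y, ⟨i, rfl⟩, rfl⟩; exact ⟨i, rfl⟩
    · rintro ⟨i, rfl⟩; exact ⟨α' i, ⟨i, rfl⟩, rfl⟩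
  have hgen : ∀ σ : F ≃ₐ[E] F, (∀ i, σ (α' i) = α' i) → ∀ x, σ x = x := by
    intro σ hσ x
    have hle : Algebra.adjoin (↥E) (Set.range α') ≤
        AlgHom.equalizer (σ : F →ₐ[E] F) (AlgHom.id (↥E) (↥F)) := by
      apply Algebra.adjoin_le
      rintro y ⟨i, rfl⟩
      exact hσ i
    exact hle (hadj ▸ Algebra.mem_top)
  -- the character map
  have hchi : ∀ (σ : F ≃ₐ[E] F) (i : Fin n), ∃ k, k < l ∧ (σ (α' i) : L) = f ζ ^ k * α i := by
    intro σ i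
    have h1 : σ (α' i) ^ l = α' i ^ l := by
      rw [← map_pow, hα'pow i, AlgEquiv.commutes]
    have h2 : ((σ (α' i) : L)) ^ l = (α i) ^ l := by
      have := congrArg (Subtype.val) h1
      push_cast at this
      exact this
    have h3 : ((σ (α' i) : L) / α i) ^ l = 1 := by
      rw [div_pow, h2, div_self (pow_ne_zero l (hα0 i))]
    obtain ⟨k, hk, hkx⟩ := hζL.eq_pow_of_pow_eq_one h3
    exact ⟨k, hk, by rw [hkx]; exact (div_mul_cancel₀ _ (hα0 i)).symm⟩
  choose kk hkk1 hkk2 using hchi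
  set χ : (F ≃ₐ[E] F) → (Fin n → ZMod l) := fun σ i => (kk σ i : ZMod l) with hχdef
  have hχval : ∀ σ i, (χ σ i).val = kk σ i := fun σ i => ZMod.val_cast_of_lt (hkk1 σ i)
  have hχinj : Function.Injective χ := by
    intro σ τ h
    have hag : ∀ i, σ (α' i) = τ (α' i) := by
      intro i
      have hkeq : kk σ i = kk τ i := by
        rw [← hχval σ i, ← hχval τ i, h]
      refine Subtype.ext ?_
      rw [hkk2 σ i, hkk2 τ i, hkeq]
    have hρ := hgen (σ.trans τ.symm) (fun i => by
      rw [AlgEquiv.trans_apply, hag i, AlgEquiv.symm_apply_apply])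
    apply AlgEquiv.ext
    intro x
    have h1 := hρ x
    rw [AlgEquiv.trans_apply] at h1
    calc σ x = τ (τ.symm (σ x)) := (τ.apply_symm_apply _).symm
    _ = τ x := by rw [h1]
  have hfin : Finite (F ≃ₐ[E] F) := Finite.of_equiv _ hGal.some.toEquiv.symm
  haveI := Fintype.ofFinite (F ≃ₐ[E] F)
  have hcard : Fintype.card (F ≃ₐ[E] F) = Fintype.card (Fin n → ZMod l) :=
    Fintype.card_congr hGal.some.toEquiv
  have hχsurj : Function.Surjective χ :=
    ((Fintype.bijective_iff_injective_and_card χ).2 ⟨hχinj, hcard⟩).2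
  haveI : Fact (1 < l) := ⟨by omega⟩
  have key : ∀ m : Fin n → ℤ, (∏ i, α i ^ m i) ∈ (algebraMap K L).range → ∀ i, (l:ℤ) ∣ m i := by
    intro m hm i0
    obtain ⟨c, hc⟩ := hm
    obtain ⟨σ, hσ⟩ := hχsurj (Pi.single i0 1)
    set P : F := ∏ i, α' i ^ m i with hPdef
    have hPL : (P : L) = ∏ i, α i ^ m i := by
      show F.val P = _
      rw [hPdef, map_prod]
      exact Finset.prod_congr rfl fun i _ => aux_coe_zpow F (α' i) (m i)
    have hPfc : (P : L) = f c := by rw [hPL, ← hc]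
    have hfcE : f c ∈ E := E.algebraMap_mem c
    have hPalg : P = algebraMap (↥E) (↥F) ⟨f c, hfcE⟩ := by
      refine Subtype.ext ?_
      rw [hPfc]; rfl
    have hPfix : σ P = P := by rw [hPalg, AlgEquiv.commutes]
    have h5 : (σ P : L) = ∏ i, ((σ (α' i) : L)) ^ m i := by
      have h4 : σ P = ∏ i, σ (α' i) ^ m i := by
        rw [hPdef, map_prod]
        exact Finset.prod_congr rfl fun i _ => aux_equiv_zpow σ (α' i) (m i)
      rw [h4]
      show F.val _ = _
      rw [map_prod]
      exact Finset.prod_congr rfl fun i _ => aux_coe_zpow F (σ (α' i)) (m i)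
    have hσP : (σ P : L) = f ζ ^ m i0 * (P : L) := by
      rw [h5]
      have h6 : ∀ i, ((σ (α' i) : L)) ^ m i = (f ζ ^ kk σ i) ^ m i * α i ^ m i := by
        intro i; rw [hkk2 σ i, mul_zpow]
      rw [Finset.prod_congr rfl fun i _ => h6 i, Finset.prod_mul_distrib, hPL]
      congr 1
      have h7 : ∀ i, kk σ i = if i = i0 then 1 else 0 := by
        intro i
        rw [← hχval σ i, hσ]
        by_cases hii : i = i0
        · subst hii; rw [Pi.single_eq_same, if_pos rfl]; exact ZMod.val_one l
        · rw [Pi.single_eq_of_ne hii, if_neg hii]; exact ZMod.val_zero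
      rw [Finset.prod_eq_single i0 ?_ ?_]
      · rw [h7 i0, if_pos rfl, pow_one]
      · intro b _ hb; rw [h7 b, if_neg hb, pow_zero, one_zpow]
      · intro h; exact absurd (Finset.mem_univ i0) h
    have hP0 : (P : L) ≠ 0 := by
      rw [hPL]
      exact Finset.prod_ne_zero_iff.mpr fun i _ => zpow_ne_zero _ (hα0 i)
    have h9 : f ζ ^ m i0 = 1 := by
      have h8 : f ζ ^ m i0 * (P : L) = 1 * (P : L) := by
        rw [← hσP, hPfix, one_mul]
      exact mul_right_cancel₀ hP0 h8
    exact (hζL.zpow_eq_one_iff_dvd _).mp h9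
  have main : ∀ k : ℕ, ∀ m : Fin n → ℤ, (∏ i, a i ^ m i) ∈ (algebraMap K L).range →
      ∀ i, ((l : ℤ)) ^ k ∣ m i := by
    intro k
    induction k with
    | zero => intro m _ i; simp
    | succ k ih =>
      intro m hm i
      obtain ⟨c, hc⟩ := hm
      have hc0 : c ≠ 0 := by
        intro h
        rw [h, map_zero] at hc
        exact (Finset.prod_ne_zero_iff.mpr fun j _ => zpow_ne_zero _ (ha j)) hc.symm
      obtain ⟨d, hd⟩ := IsAlgClosed.exists_pow_nat_eq c (by omega : 0 < l)
      have hfc0 : f c ≠ 0 := fun h => hc0 (hfinj (h.trans (map_zero f).symm))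
      have hfac : ∀ j, (α j ^ m j) ^ l = a j ^ m j := by
        intro j
        rw [← zpow_natCast (α j ^ m j) l, ← zpow_mul, mul_comm, zpow_mul, zpow_natCast, hα j]
      have hβ : ((∏ j, α j ^ m j) / f d) ^ l = 1 := by
        rw [div_pow, ← Finset.prod_pow, Finset.prod_congr rfl fun j _ => hfac j, ← hc,
          ← map_pow, hd]
        exact div_self hfc0
      obtain ⟨k', hk', hkβ⟩ := hζL.eq_pow_of_pow_eq_one hβ
      have hαm : (∏ j, α j ^ m j) ∈ (algebraMap K L).range := by
        refine ⟨ζ ^ k' * d, ?_⟩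
        rw [map_mul, map_pow]
        rw [hkβ]
        have hfd0 : f d ≠ 0 := fun h =>
          hc0 (by rw [← hd, hfinj (h.trans (map_zero f).symm), zero_pow hl0])
        field_simp
        rfl
      have hdvd := key m hαm
      set m' : Fin n → ℤ := fun j => m j / l with hm'def
      have hmm : ∀ j, m j = l * m' j := fun j => (Int.mul_ediv_cancel' (hdvd j)).symm
      have hprod : (∏ j, a j ^ m' j) = ∏ j, α j ^ m j := by
        refine Finset.prod_congr rfl fun j _ => ?_
        rw [← hα j, ← zpow_natCast (α j) l, ← zpow_mul, ← hmm j]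
      have hm'range : (∏ j, a j ^ m' j) ∈ (algebraMap K L).range := hprod ▸ hαm
      have hIH := ih m' hm'range i
      rw [hmm i, pow_succ']
      exact mul_dvd_mul_left _ hIH
  intro m hm i
  by_contra h0
  have h1 := main (m i).natAbs m hm i
  have h2 : ((l : ℤ)) ^ (m i).natAbs ≤ |m i| :=
    Int.le_of_dvd (abs_pos.mpr h0) ((dvd_abs _ _).mpr h1)
  have h3 : (2 : ℤ) ^ (m i).natAbs ≤ ((l : ℤ)) ^ (m i).natAbs :=
    pow_le_pow_left₀ (by norm_num) (by exact_mod_cast hl) _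
  have h4 : |m i| = ((m i).natAbs : ℤ) := Int.abs_eq_natAbs _
  have h5 : (((m i).natAbs : ℤ)) < 2 ^ (m i).natAbs := by
    exact_mod_cast Nat.lt_two_pow_self
  rw [h4] at h2
  linarith
end

section
/- Let f: X → Y be a surjective group homomorphism of abelian groups whose kernel is the torsion subgroup of X. Then for any subgroup B ≤ Y and any prime p, the preimage f⁻¹(B) is p-pure in X if and only if B is p-pure in Y. -/
/-- If `f : X → Y` is a surjective homomorphism of abelian groups
whose kernel is exactly the torsion subgroup of `X`, then for a subgroup `B ≤ Y`
and a prime `p`, the preimage `f⁻¹(B)` is `p`-pure in `X` iff `B` is `p`-pure in `Y`. -/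
theorem stmt17 {X Y : Type*} [CommGroup X] [CommGroup Y] (f : X →* Y)
    (hsurj : Function.Surjective f)
    (hker : ∀ x : X, f x = 1 ↔ ∃ m : ℕ, 0 < m ∧ x ^ m = 1)
    (B : Subgroup Y) (p : ℕ) (hp : p.Prime) :
    (∀ b ∈ B.comap f, (∃ x : X, x ^ p = b) → ∃ y ∈ B.comap f, y ^ p = b) ↔
      (∀ b ∈ B, (∃ x : Y, x ^ p = b) → ∃ y ∈ B, y ^ p = b) := by
  have htors : ∀ c : Y, (∃ m : ℕ, 0 < m ∧ c ^ m = 1) → c = 1 := by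
    rintro c ⟨m, hm, hcm⟩
    obtain ⟨c', hc'⟩ := hsurj c
    have : f c' = 1 := by
      have h1 : f (c' ^ m) = 1 := by rw [map_pow, hc', hcm]
      obtain ⟨k, hk, hk1⟩ := (hker _).mp h1
      exact (hker c').mpr ⟨m * k, Nat.mul_pos hm hk, by rw [pow_mul]; exact hk1⟩
    rw [hc'] at this; exact this
  constructor
  · intro h b hb ⟨x, hx⟩
    obtain ⟨x', hx'⟩ := hsurj x
    have hmem : x' ^ p ∈ B.comap f := by
      simp only [Subgroup.mem_comap, map_pow, hx', hx]; exact hb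
    obtain ⟨y, hy, hyp⟩ := h (x' ^ p) hmem ⟨x', rfl⟩
    exact ⟨f y, hy, by rw [← map_pow, hyp, map_pow, hx', hx]⟩
  · intro h a ha ⟨x, hx⟩
    have hfa : f a ∈ B := ha
    obtain ⟨y, hy, hyp⟩ := h (f a) hfa ⟨f x, by rw [← map_pow, hx]⟩
    have hc : (y * (f x)⁻¹) ^ p = 1 := by
      rw [mul_pow, hyp, inv_pow, ← map_pow, hx, mul_inv_cancel]
    have : y * (f x)⁻¹ = 1 := htors _ ⟨p, hp.pos, hc⟩
    have hfx : f x = y := by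
      have := mul_inv_eq_one.mp this; exact this.symm
    exact ⟨x, by simp [Subgroup.mem_comap, hfx, hy], hx⟩
end
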